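/- With ξ as in the cubic interpolation (A < 0, B > 0, a > 0), one has ξ'(τ_2) - ξ'(ρ) ≥ a(τ_2 - ρ) · B(τ_2 - τ_1)^2 / (B(τ_2 - τ_1) - 2A) ≥ 0 for all ρ ∈ [τ_1, τ_2], with strict inequality ξ'(ρ) < ξ'(τ_2) when ρ < τ_2. -/

import Mathlib

/-- With `ξ` as in the cubic interpolation (`A < 0`, `B > 0`, `a > 0`), one has
`ξ'(τ₂) - ξ'(ρ) ≥ a(τ₂ - ρ)·B(τ₂ - τ₁)²/(B(τ₂ - τ₁) - 2A) ≥ 0` for all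
`ρ ∈ [τ₁, τ₂]`, with strict inequality `ξ'(ρ) < ξ'(τ₂)` when `ρ < τ₂`. -/
theorem cubic_deriv_estimate (τ₁ τ₂ A B : ℝ) (h12 : τ₁ < τ₂) (hA : A < 0) (hB : 0 < B) :
    let a := (τ₂ - τ₁) ^ (-2 : ℤ) * (B - 2 * A * (τ₂ - τ₁)⁻¹)
    let b := (τ₂ - τ₁) ^ (-2 : ℤ) * (A - τ₂ * B + 2 * A * τ₂ * (τ₂ - τ₁)⁻¹)
    let ξ := fun ρ : ℝ => (ρ - τ₁) ^ 2 * (a * ρ + b)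
    ∀ ρ ∈ Set.Icc τ₁ τ₂,
      (deriv ξ τ₂ - deriv ξ ρ ≥
        a * (τ₂ - ρ) * (B * (τ₂ - τ₁) ^ 2 / (B * (τ₂ - τ₁) - 2 * A)) ∧
       a * (τ₂ - ρ) * (B * (τ₂ - τ₁) ^ 2 / (B * (τ₂ - τ₁) - 2 * A)) ≥ 0) ∧
      (ρ < τ₂ → deriv ξ ρ < deriv ξ τ₂) := by
  intro a b ξ ρ hρ
  have hs : (0 : ℝ) < τ₂ - τ₁ := sub_pos.2 h12
  have hs' : τ₂ - τ₁ ≠ 0 := ne_of_gt hs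
  have hD : 0 < B * (τ₂ - τ₁) - 2 * A := by nlinarith
  have hD' : B * (τ₂ - τ₁) - 2 * A ≠ 0 := ne_of_gt hD
  have hz : (τ₂ - τ₁) ^ (-2 : ℤ) = ((τ₂ - τ₁) ^ 2)⁻¹ := by
    rw [zpow_neg]; norm_cast
  have ha : a = (B * (τ₂ - τ₁) - 2 * A) / (τ₂ - τ₁) ^ 3 := by
    show (τ₂ - τ₁) ^ (-2 : ℤ) * (B - 2 * A * (τ₂ - τ₁)⁻¹) = _
    rw [hz]; field_simp
  have hb : b = (A * (τ₂ - τ₁) - τ₂ * B * (τ₂ - τ₁) + 2 * A * τ₂) / (τ₂ - τ₁) ^ 3 := by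
    show (τ₂ - τ₁) ^ (-2 : ℤ) * (A - τ₂ * B + 2 * A * τ₂ * (τ₂ - τ₁)⁻¹) = _
    rw [hz]; field_simp
  have hapos : 0 < a := by rw [ha]; positivity
  have hd : ∀ x : ℝ, deriv ξ x = 2 * (x - τ₁) * (a * x + b) + (x - τ₁) ^ 2 * a := by
    intro x
    have h1 : HasDerivAt (fun ρ : ℝ => (ρ - τ₁) ^ 2) (2 * (x - τ₁)) x := by
      simpa using ((hasDerivAt_id x).sub_const τ₁).fun_pow 2
    have h2 : HasDerivAt (fun ρ : ℝ => a * ρ + b) a x := by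
      simpa using ((hasDerivAt_id x).const_mul a).add_const b
    exact (h1.mul h2).deriv
  have key : deriv ξ τ₂ - deriv ξ ρ
      = a * (τ₂ - ρ) * (B * (τ₂ - τ₁) ^ 2 / (B * (τ₂ - τ₁) - 2 * A))
        + 3 * a * (τ₂ - ρ) * (ρ - τ₁) := by
    rw [hd, hd, ha, hb]
    rw [show (B * (τ₂ - τ₁) - 2 * A) / (τ₂ - τ₁) ^ 3 * (τ₂ - ρ) * (B * (τ₂ - τ₁) ^ 2 / (B * (τ₂ - τ₁) - 2 * A)) = (τ₂ - ρ) * B / (τ₂ - τ₁) by field_simp]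
    field_simp
    ring
  have h1 : τ₁ ≤ ρ := hρ.1
  have h2 : ρ ≤ τ₂ := hρ.2
  have hC : 0 < B * (τ₂ - τ₁) ^ 2 / (B * (τ₂ - τ₁) - 2 * A) := by positivity
  have hrest : 0 ≤ 3 * a * (τ₂ - ρ) * (ρ - τ₁) := by
    have := mul_nonneg (mul_nonneg (by linarith [hapos] : (0:ℝ) ≤ 3 * a)
      (by linarith : (0:ℝ) ≤ τ₂ - ρ)) (by linarith : (0:ℝ) ≤ ρ - τ₁)
    linarith
  refine ⟨⟨by rw [key]; linarith, ?_⟩, fun hlt => ?_⟩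
  · have : 0 ≤ a * (τ₂ - ρ) := mul_nonneg hapos.le (by linarith)
    exact mul_nonneg this hC.le
  · have hpos : 0 < a * (τ₂ - ρ) * (B * (τ₂ - τ₁) ^ 2 / (B * (τ₂ - τ₁) - 2 * A)) := by
      have : 0 < a * (τ₂ - ρ) := mul_pos hapos (by linarith)
      exact mul_pos this hC
    nlinarith [key]
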